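/- Let a < b be reals and let U_n be an (n+1)-dimensional subspace of C^n([a,b],ℝ) possessing a non-negative Bernstein basis p_{n,0},…,p_{n,n}, and let f_0 ∈ U_n be strictly positive on [a,b] with D_{f_0}U_n := { (f/f_0)′ : f ∈ U_n } possessing a non-negative Bernstein basis q_{n-1,0},…,q_{n-1,n-1}. Let f_1 ∈ U_n be such that f_1/f_0 is strictly increasing on [a,b], write f_0 = Σ_{k=0}^n β_{n,k} p_{n,k} and f_1 = Σ_{k=0}^n γ_{n,k} p_{n,k}, assume β_{n,k} > 0 for all k, and define coefficients w_0,…,w_{n-1} by (f_1/f_0)′ = Σ_{k=0}^{n-1} w_k q_{n-1,k}. Then the sequence k ↦ γ_{n,k}/β_{n,k} is strictly increasing if and only if w_k > 0 for all k = 0,…,n−1. -/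

import Mathlib

open Set Filter Topology

noncomputable section

/-- `p k`, `k = 0, …, n`, is a Bernstein basis of the `(n+1)`-dimensional subspace `U` of
`C^n([a,b], ℝ)`: it is a basis of `U` and each `p k` has a zero of order `k` at `a`
(derivatives of order `< k` vanish at `a`, the `k`-th does not) and a zero of order
`n - k` at `b`. -/
def IsBernsteinBasisOf (a b : ℝ) (n : ℕ) (U : Submodule ℝ (ℝ → ℝ))
    (p : Fin (n + 1) → ℝ → ℝ) : Prop :=
  (∀ k, p k ∈ U) ∧ LinearIndependent ℝ p ∧ Submodule.span ℝ (Set.range p) = U ∧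
  ∀ k : Fin (n + 1),
    (∀ j : ℕ, j < (k : ℕ) → iteratedDeriv j (p k) a = 0) ∧
    iteratedDeriv (k : ℕ) (p k) a ≠ 0 ∧
    (∀ j : ℕ, j < n - (k : ℕ) → iteratedDeriv j (p k) b = 0) ∧
    iteratedDeriv (n - (k : ℕ)) (p k) b ≠ 0

/-- `q k`, `k = 0, …, n-1`, is a Bernstein basis of the `n`-dimensional space
`D_{f₀}U = { (f/f₀)' : f ∈ U }`: every `q k` lies in `D_{f₀}U`, every element of `D_{f₀}U`
lies in the span of the `q k`, the family is linearly independent, and each `q k` has a zero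
of order `k` at `a` and a zero of order `n - 1 - k` at `b`. -/
def IsBernsteinBasisOfD (a b : ℝ) (n : ℕ) (f₀ : ℝ → ℝ) (U : Submodule ℝ (ℝ → ℝ))
    (q : Fin n → ℝ → ℝ) : Prop :=
  (∀ k, ∃ f ∈ U, q k = deriv (fun x => f x / f₀ x)) ∧
  (∀ f ∈ U, deriv (fun x => f x / f₀ x) ∈ Submodule.span ℝ (Set.range q)) ∧
  LinearIndependent ℝ q ∧
  ∀ k : Fin n,
    (∀ j : ℕ, j < (k : ℕ) → iteratedDeriv j (q k) a = 0) ∧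
    iteratedDeriv (k : ℕ) (q k) a ≠ 0 ∧
    (∀ j : ℕ, j < n - 1 - (k : ℕ) → iteratedDeriv j (q k) b = 0) ∧
    iteratedDeriv (n - 1 - (k : ℕ)) (q k) b ≠ 0


section RatioAux

private lemma itd_zero_fun (m : ℕ) (x : ℝ) : iteratedDeriv m (fun _ : ℝ => (0:ℝ)) x = 0 := by
  induction m generalizing x with
  | zero => simp
  | succ m ih =>
    rw [iteratedDeriv_succ']
    have h : deriv (fun _ : ℝ => (0:ℝ)) = fun _ : ℝ => (0:ℝ) := by
      funext y; simp
    rw [h]; exact ih x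

private lemma itd_congr {Ω : Set ℝ} (hΩ : IsOpen Ω) {x : ℝ} (hx : x ∈ Ω)
    {f g : ℝ → ℝ} (h : ∀ y ∈ Ω, f y = g y) (m : ℕ) :
    iteratedDeriv m f x = iteratedDeriv m g x :=
  Filter.EventuallyEq.iteratedDeriv_eq m (by
    filter_upwards [hΩ.mem_nhds hx] with y hy using h y hy)

private lemma itd_cmul (m : ℕ) (c : ℝ) (f : ℝ → ℝ) (x : ℝ) :
    iteratedDeriv m (fun y => c * f y) x = c * iteratedDeriv m f x := by
  induction m generalizing f x with
  | zero => simp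
  | succ m ih =>
    rw [iteratedDeriv_succ', iteratedDeriv_succ', deriv_const_mul_field' c]
    exact ih (deriv f) x

private lemma itd_add (m : ℕ) {Ω : Set ℝ} (hΩ : IsOpen Ω) {x : ℝ} (hx : x ∈ Ω)
    {f g : ℝ → ℝ} (hf : ContDiffOn ℝ m f Ω) (hg : ContDiffOn ℝ m g Ω) :
    iteratedDeriv m (fun y => f y + g y) x
      = iteratedDeriv m f x + iteratedDeriv m g x := by
  induction m generalizing f g x with
  | zero => simp
  | succ m ih =>
    have hf1 : DifferentiableOn ℝ f Ω :=
      hf.differentiableOn (by simp)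
    have hg1 : DifferentiableOn ℝ g Ω :=
      hg.differentiableOn (by simp)
    rw [iteratedDeriv_succ', iteratedDeriv_succ' (f := f), iteratedDeriv_succ' (f := g)]
    have e : iteratedDeriv m (deriv fun y => f y + g y) x
        = iteratedDeriv m (fun y => deriv f y + deriv g y) x := by
      refine itd_congr hΩ hx (fun y hy => ?_) m
      exact deriv_add (hf1.differentiableAt (hΩ.mem_nhds hy))
        (hg1.differentiableAt (hΩ.mem_nhds hy))
    rw [e]
    exact ih hx (hf.deriv_of_isOpen hΩ (by norm_cast)) (hg.deriv_of_isOpen hΩ (by norm_cast))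

private lemma itd_sum {ι : Type*} (s : Finset ι) (F : ι → ℝ → ℝ) (m : ℕ)
    {Ω : Set ℝ} (hΩ : IsOpen Ω) {x : ℝ} (hx : x ∈ Ω)
    (hF : ∀ i ∈ s, ContDiffOn ℝ m (F i) Ω) :
    iteratedDeriv m (fun y => ∑ i ∈ s, F i y) x = ∑ i ∈ s, iteratedDeriv m (F i) x := by
  induction s using Finset.cons_induction with
  | empty => simpa using itd_zero_fun m x
  | cons i s his ih =>
    rw [Finset.sum_cons]
    have e : (fun y => ∑ j ∈ Finset.cons i s his, F j y) = fun y => F i y + ∑ j ∈ s, F j y := by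
      funext y; rw [Finset.sum_cons]
    rw [e, itd_add m hΩ hx (hF i (Finset.mem_cons_self i s))
      (ContDiffOn.sum (fun j hj => hF j (Finset.mem_cons_of_mem hj))),
      ih (fun j hj => hF j (Finset.mem_cons_of_mem hj))]

private lemma itd_combo {n : ℕ} (q : Fin n → ℝ → ℝ) (d : Fin n → ℝ) (m : ℕ)
    {Ω : Set ℝ} (hΩ : IsOpen Ω) {x : ℝ} (hx : x ∈ Ω)
    (hsm : ∀ i, ContDiffOn ℝ m (q i) Ω) :
    iteratedDeriv m (fun y => ∑ i, d i * q i y) x = ∑ i, d i * iteratedDeriv m (q i) x := by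
  rw [itd_sum Finset.univ (fun i y => d i * q i y) m hΩ hx
    (fun i _ => contDiffOn_const.mul (hsm i))]
  exact Finset.sum_congr rfl fun i _ => itd_cmul m (d i) (q i) x

private lemma itd_mul_zero {Ω : Set ℝ} (hΩ : IsOpen Ω) {x : ℝ} (hx : x ∈ Ω) :
    ∀ (i : ℕ) (f g : ℝ → ℝ), ContDiffOn ℝ i f Ω → ContDiffOn ℝ i g Ω →
      (∀ j, j ≤ i → iteratedDeriv j f x = 0) →
      iteratedDeriv i (fun y => f y * g y) x = 0 := by
  intro i
  induction i with
  | zero =>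
    intro f g _ _ hv
    have h0 : f x = 0 := by simpa [iteratedDeriv_zero] using hv 0 le_rfl
    simp [iteratedDeriv_zero, h0]
  | succ i ih =>
    intro f g hf hg hv
    have hf1 : DifferentiableOn ℝ f Ω :=
      hf.differentiableOn (by simp)
    have hg1 : DifferentiableOn ℝ g Ω :=
      hg.differentiableOn (by simp)
    rw [iteratedDeriv_succ']
    have e : iteratedDeriv i (deriv fun y => f y * g y) x
        = iteratedDeriv i (fun y => deriv f y * g y + f y * deriv g y) x := by
      refine itd_congr hΩ hx (fun y hy => ?_) i
      exact deriv_mul (hf1.differentiableAt (hΩ.mem_nhds hy))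
        (hg1.differentiableAt (hΩ.mem_nhds hy))
    have hdf : ContDiffOn ℝ i (deriv f) Ω := hf.deriv_of_isOpen hΩ (by norm_cast)
    have hdg : ContDiffOn ℝ i (deriv g) Ω := hg.deriv_of_isOpen hΩ (by norm_cast)
    have hfi : ContDiffOn ℝ i f Ω := hf.of_le (by exact_mod_cast Nat.le_succ i)
    have hgi : ContDiffOn ℝ i g Ω := hg.of_le (by exact_mod_cast Nat.le_succ i)
    rw [e, itd_add i hΩ hx (hdf.mul hgi) (hfi.mul hdg)]
    have z1 : iteratedDeriv i (fun y => deriv f y * g y) x = 0 := by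
      refine ih (deriv f) g hdf hgi (fun j hj => ?_)
      rw [← iteratedDeriv_succ']
      exact hv (j+1) (by omega)
    have z2 : iteratedDeriv i (fun y => f y * deriv g y) x = 0 := by
      refine ih f (deriv g) hfi hdg (fun j hj => hv j (by omega))
    rw [z1, z2, add_zero]

private lemma tri_a {n : ℕ} (q : Fin n → ℝ → ℝ) (a : ℝ)
    {Ω : Set ℝ} (hΩ : IsOpen Ω) (ha : a ∈ Ω)
    (hsm : ∀ i : Fin n, ContDiffOn ℝ (n-1 : ℕ) (q i) Ω)
    (hzero : ∀ i : Fin n, ∀ m : ℕ, m < (i:ℕ) → iteratedDeriv m (q i) a = 0)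
    (hdiag : ∀ i : Fin n, iteratedDeriv (i:ℕ) (q i) a ≠ 0)
    (d : Fin n → ℝ) (M : ℕ)
    (hvan : ∀ m : ℕ, m ≤ M → iteratedDeriv m (fun y => ∑ i, d i * q i y) a = 0) :
    ∀ j : Fin n, (j:ℕ) ≤ M → d j = 0 := by
  suffices H : ∀ m : ℕ, ∀ j : Fin n, (j:ℕ) = m → m ≤ M → d j = 0 by
    intro j hj; exact H j j rfl hj
  intro m
  induction m using Nat.strong_induction_on with
  | _ m ih =>
    intro j hj hM
    have h0 := hvan m hM
    have hsm' : ∀ i : Fin n, ContDiffOn ℝ (m : ℕ) (q i) Ω := by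
      intro i
      refine (hsm i).of_le ?_
      have : m ≤ n - 1 := by have := j.isLt; omega
      exact_mod_cast this
    rw [itd_combo q d m hΩ ha hsm'] at h0
    rw [Finset.sum_eq_single j ?side ?notmem] at h0
    · have hd : iteratedDeriv m (q j) a ≠ 0 := by rw [← hj]; exact hdiag j
      rcases mul_eq_zero.mp h0 with h | h
      · exact h
      · exact absurd h hd
    case side =>
      intro i _ hij
      rcases Nat.lt_trichotomy (i:ℕ) m with hlt | heq | hgt
      · rw [ih (i:ℕ) hlt i rfl (by omega), zero_mul]
      · exact absurd (Fin.ext (by omega : (i:ℕ) = (j:ℕ))) hij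
      · rw [hzero i m hgt, mul_zero]
    case notmem => intro h; exact absurd (Finset.mem_univ j) h

private lemma tri_b {n : ℕ} (q : Fin n → ℝ → ℝ) (b : ℝ)
    {Ω : Set ℝ} (hΩ : IsOpen Ω) (hb : b ∈ Ω)
    (hsm : ∀ i : Fin n, ContDiffOn ℝ (n-1 : ℕ) (q i) Ω)
    (hzero : ∀ i : Fin n, ∀ m : ℕ, m < n - 1 - (i:ℕ) → iteratedDeriv m (q i) b = 0)
    (hdiag : ∀ i : Fin n, iteratedDeriv (n - 1 - (i:ℕ)) (q i) b ≠ 0)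
    (d : Fin n → ℝ) (M : ℕ) (hMn : M ≤ n - 1)
    (hvan : ∀ m : ℕ, m ≤ M → iteratedDeriv m (fun y => ∑ i, d i * q i y) b = 0) :
    ∀ j : Fin n, n - 1 - (j:ℕ) ≤ M → d j = 0 := by
  suffices H : ∀ m : ℕ, ∀ j : Fin n, n - 1 - (j:ℕ) = m → m ≤ M → d j = 0 by
    intro j hj; exact H _ j rfl hj
  intro m
  induction m using Nat.strong_induction_on with
  | _ m ih =>
    intro j hj hM
    have h0 := hvan m hM
    have hsm' : ∀ i : Fin n, ContDiffOn ℝ (m : ℕ) (q i) Ω := by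
      intro i
      refine (hsm i).of_le ?_
      have : m ≤ n - 1 := le_trans hM hMn
      exact_mod_cast this
    rw [itd_combo q d m hΩ hb hsm'] at h0
    rw [Finset.sum_eq_single j ?side ?notmem] at h0
    · have hd : iteratedDeriv m (q j) b ≠ 0 := by rw [← hj]; exact hdiag j
      rcases mul_eq_zero.mp h0 with h | h
      · exact h
      · exact absurd h hd
    case side =>
      intro i _ hij
      rcases Nat.lt_trichotomy (n - 1 - (i:ℕ)) m with hlt | heq | hgt
      · rw [ih (n - 1 - (i:ℕ)) hlt i rfl (by omega), zero_mul]
      · refine absurd (Fin.ext ?_) hij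
        have h1 := i.isLt; have h2 := j.isLt
        omega
      · rw [hzero i m hgt, mul_zero]
    case notmem => intro h; exact absurd (Finset.mem_univ j) h

private lemma fin_telescope : ∀ {n : ℕ} (u : Fin (n+1) → ℝ),
    ∑ j : Fin n, (u j.succ - u j.castSucc) = u (Fin.last n) - u 0 := by
  intro n
  induction n with
  | zero => intro u; simp
  | succ n ih =>
    intro u
    rw [Fin.sum_univ_castSucc]
    have e1 : ∀ i : Fin n, u (Fin.castSucc i).succ - u (Fin.castSucc i).castSucc
        = (u ∘ Fin.castSucc) i.succ - (u ∘ Fin.castSucc) i.castSucc := by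
      intro i
      simp only [Function.comp_apply, Fin.succ_castSucc]
    rw [Finset.sum_congr rfl (fun i _ => e1 i), ih (u ∘ Fin.castSucc)]
    simp only [Function.comp_apply, Fin.succ_last, Fin.castSucc_zero]
    ring

end RatioAux
/-- Theorem (b) ⟺ (c), strict version: `k ↦ γ k / β k` is strictly increasing iff all the
coefficients `w k` of `(f₁/f₀)'` in the Bernstein basis of `D_{f₀}U` are strictly positive. -/
theorem ratio_strictMono_iff_w_pos
    (n : ℕ) (a b : ℝ) (hab : a < b)
    (U : Submodule ℝ (ℝ → ℝ))
    (hUdim : Module.finrank ℝ ↥U = n + 1)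
    (hUsmooth : ∀ f ∈ U, ContDiff ℝ (n : ℕ∞) f)
    (p : Fin (n + 1) → ℝ → ℝ)
    (hp : IsBernsteinBasisOf a b n U p)
    (hpnn : ∀ k, ∀ x ∈ Set.Icc a b, 0 ≤ p k x)
    (f₀ f₁ : ℝ → ℝ) (hf₀U : f₀ ∈ U) (hf₁U : f₁ ∈ U)
    (hf₀pos : ∀ x ∈ Set.Icc a b, 0 < f₀ x)
    (q : Fin n → ℝ → ℝ)
    (hq : IsBernsteinBasisOfD a b n f₀ U q)
    (hqnn : ∀ k, ∀ x ∈ Set.Icc a b, 0 ≤ q k x)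
    (hmono : StrictMonoOn (fun x => f₁ x / f₀ x) (Set.Icc a b))
    (β γ : Fin (n + 1) → ℝ)
    (hβ : ∀ x, f₀ x = ∑ k, β k * p k x)
    (hγ : ∀ x, f₁ x = ∑ k, γ k * p k x)
    (hβpos : ∀ k, 0 < β k)
    (w : Fin n → ℝ)
    (hw : ∀ x, deriv (fun y => f₁ y / f₀ y) x = ∑ k, w k * q k x) :
    (StrictMono fun k => γ k / β k) ↔ ∀ k, 0 < w k := by
  obtain ⟨hpU, hplin, hpspan, hpord⟩ := hp
  obtain ⟨hqD, hqspan, hqlin, hqord⟩ := hq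
  set Ω : Set ℝ := {x | f₀ x ≠ 0} with hΩdef
  have hf₀c : Continuous f₀ := (hUsmooth f₀ hf₀U).continuous
  have hΩ : IsOpen Ω := isOpen_ne_fun hf₀c continuous_const
  have hIccΩ : Set.Icc a b ⊆ Ω := fun x hx => (hf₀pos x hx).ne'
  have haΩ : a ∈ Ω := hIccΩ (Set.left_mem_Icc.mpr hab.le)
  have hbΩ : b ∈ Ω := hIccΩ (Set.right_mem_Icc.mpr hab.le)
  have hpsm : ∀ j, ContDiff ℝ (n : ℕ∞) (p j) := fun j => hUsmooth _ (hpU j)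
  have hinv : ContDiffOn ℝ (n : ℕ∞) (fun y => (f₀ y)⁻¹) Ω :=
    ((hUsmooth f₀ hf₀U).contDiffOn).inv (fun x hx => hx)
  have hqsm : ∀ i : Fin n, ContDiffOn ℝ ((n - 1 : ℕ) : ℕ∞) (q i) Ω := by
    intro i
    obtain ⟨φ, hφU, hφd⟩ := hqD i
    have hdiv : ContDiffOn ℝ (n : ℕ∞) (fun y => φ y / f₀ y) Ω :=
      ((hUsmooth φ hφU).contDiffOn).div ((hUsmooth f₀ hf₀U).contDiffOn) (fun x hx => hx)
    rw [hφd]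
    exact hdiv.deriv_of_isOpen hΩ
      (by exact_mod_cast (by have := i.isLt; omega : (n-1) + 1 ≤ n))
  have hcombU : ∀ c : Fin (n+1) → ℝ, (fun y => ∑ j, c j * p j y) ∈ U := by
    intro c
    have e : (fun y => ∑ j, c j * p j y) = ∑ j, c j • p j := by
      funext y
      rw [Finset.sum_apply]
      exact Finset.sum_congr rfl fun j _ => rfl
    rw [e]
    exact Submodule.sum_mem _ fun j _ => Submodule.smul_mem _ _ (hpU j)
  have hDcoef : ∀ f, f ∈ U → ∃ α : Fin n → ℝ,
      ∀ x, deriv (fun y => f y / f₀ y) x = ∑ j, α j * q j x := by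
    intro f hf
    obtain ⟨α, hα⟩ := (Submodule.mem_span_range_iff_exists_fun ℝ).mp (hqspan f hf)
    refine ⟨α, fun x => ?_⟩
    have h := congrFun hα x
    simpa [Finset.sum_apply] using h.symm
  have hcsm : ∀ (c : Fin (n+1) → ℝ) (m : ℕ), m ≤ n →
      ContDiffOn ℝ (m : ℕ∞) (fun y => ∑ j, c j * p j y) Ω := by
    intro c m hm
    exact ContDiffOn.sum fun j _ => contDiffOn_const.mul
      (((hpsm j).of_le (by exact_mod_cast hm)).contDiffOn)
  have hpb0 : ∀ j : Fin (n+1), (j:ℕ) < n → p j b = 0 := by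
    intro j hj
    have h := (hpord j).2.2.1 0 (by omega)
    rwa [iteratedDeriv_zero] at h
  have hpa0 : ∀ j : Fin (n+1), 0 < (j:ℕ) → p j a = 0 := by
    intro j hj
    have h := (hpord j).1 0 hj
    rwa [iteratedDeriv_zero] at h
  have hpa0' : p 0 a ≠ 0 := by
    have h := (hpord 0).2.1
    simpa [iteratedDeriv_zero] using h
  have hplastb : p (Fin.last n) b ≠ 0 := by
    have h := (hpord (Fin.last n)).2.2.2
    simpa [Fin.val_last, iteratedDeriv_zero] using h
  have hvala : ∀ c : Fin (n+1) → ℝ, ∑ j, c j * p j a = c 0 * p 0 a := by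
    intro c
    refine Finset.sum_eq_single 0 (fun i _ hi => ?_) (fun h => absurd (Finset.mem_univ _) h)
    have hipos : 0 < (i:ℕ) := Nat.pos_of_ne_zero (fun h => hi (Fin.ext (by simp [h])))
    rw [hpa0 i hipos, mul_zero]
  have hvalb : ∀ c : Fin (n+1) → ℝ, ∑ j, c j * p j b = c (Fin.last n) * p (Fin.last n) b := by
    intro c
    refine Finset.sum_eq_single _ (fun i _ hi => ?_) (fun h => absurd (Finset.mem_univ _) h)
    have hilt : (i:ℕ) < n := by
      have h1 := i.isLt
      have h2 : (i:ℕ) ≠ n := fun h => hi (Fin.ext (by simp [h, Fin.val_last]))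
      omega
    rw [hpb0 i hilt, mul_zero]
  have hrata : ∀ c : Fin (n+1) → ℝ, (∑ j, c j * p j a) / f₀ a = c 0 / β 0 := by
    intro c
    rw [hvala c, hβ a, hvala β]
    exact mul_div_mul_right _ _ hpa0'
  have hratb : ∀ c : Fin (n+1) → ℝ,
      (∑ j, c j * p j b) / f₀ b = c (Fin.last n) / β (Fin.last n) := by
    intro c
    rw [hvalb c, hβ b, hvalb β]
    exact mul_div_mul_right _ _ hplastb
  have hdiffU : ∀ g, g ∈ U → n ≠ 0 → ∀ x ∈ Ω, DifferentiableAt ℝ (fun y => g y / f₀ y) x := by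
    intro g hg hn x hx
    have h1 : DifferentiableAt ℝ g x :=
      ((hUsmooth g hg).differentiable
        (by exact_mod_cast hn)).differentiableAt
    have h2 : DifferentiableAt ℝ f₀ x :=
      ((hUsmooth f₀ hf₀U).differentiable
        (by exact_mod_cast hn)).differentiableAt
    exact h1.div h2 hx
  have hρ0 : ∀ k : Fin n, ∃ ρ : Fin n → ℝ,
      ∀ x, deriv (fun y => p k.succ y / f₀ y) x = ∑ j, ρ j * q j x :=
    fun k => hDcoef (p k.succ) (hpU k.succ)
  choose ρ hρ using hρ0
  set R : Fin n → ℝ := fun k => ρ k k * β k.succ with hRdef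
  -- MASTER LEMMA
  have master : ∀ (c : Fin (n+1) → ℝ) (v : Fin n → ℝ),
      (∀ x ∈ Ω, deriv (fun y => (∑ j, c j * p j y) / f₀ y) x = ∑ j, v j * q j x) →
      ∀ k : Fin n, v k = R k * (c k.succ / β k.succ - c k.castSucc / β k.castSucc) := by
    intro c v hv k
    have hkn := k.isLt
    set t : ℝ := c k.castSucc / β k.castSucc with htdef
    set c' : Fin (n+1) → ℝ := fun j => c j - t * β j with hc'def
    have hc'k : c' k.castSucc = 0 := by
      simp only [hc'def, htdef]
      rw [div_mul_cancel₀ _ (hβpos k.castSucc).ne']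
      ring
    set A : ℝ → ℝ := fun y => ∑ j : Fin (n+1), (if (j:ℕ) < (k:ℕ) then c' j else 0) * p j y with hAdef
    set Bf : ℝ → ℝ := fun y => ∑ j : Fin (n+1), (if (k:ℕ)+1 < (j:ℕ) then c' j else 0) * p j y with hBdef
    have hsplit : ∀ y, A y + c' k.succ * p k.succ y + Bf y = ∑ j, c' j * p j y := by
      intro y
      have hmid : c' k.succ * p k.succ y = ∑ j, (if j = k.succ then c' j * p j y else 0) := by
        rw [Finset.sum_ite_eq' Finset.univ k.succ (fun j => c' j * p j y)]
        simp
      simp only [hAdef, hBdef]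
      rw [hmid, ← Finset.sum_add_distrib, ← Finset.sum_add_distrib]
      refine Finset.sum_congr rfl fun j _ => ?_
      rcases Nat.lt_trichotomy (j:ℕ) (k:ℕ) with h1 | h1 | h1
      · rw [if_pos h1, if_neg (show ¬((k:ℕ)+1 < (j:ℕ)) by omega),
          if_neg (show ¬(j = k.succ) from fun hj => by rw [hj, Fin.val_succ] at h1; omega)]
        ring
      · have hj : j = k.castSucc := Fin.ext (by rw [Fin.coe_castSucc]; exact h1)
        rw [if_neg (show ¬((j:ℕ) < (k:ℕ)) by omega),
          if_neg (show ¬((k:ℕ)+1 < (j:ℕ)) by omega),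
          if_neg (show ¬(j = k.succ) from fun hjj => by rw [hjj, Fin.val_succ] at h1; omega),
          hj, hc'k]
        ring
      · rcases Nat.lt_or_ge ((k:ℕ)+1) (j:ℕ) with h2 | h2
        · rw [if_neg (show ¬((j:ℕ) < (k:ℕ)) by omega), if_pos h2,
            if_neg (show ¬(j = k.succ) from fun hjj => by rw [hjj, Fin.val_succ] at h2; omega)]
          ring
        · have hj : j = k.succ := Fin.ext (by rw [Fin.val_succ]; omega)
          rw [if_neg (show ¬((j:ℕ) < (k:ℕ)) by omega),
            if_neg (show ¬((k:ℕ)+1 < (j:ℕ)) by omega), if_pos hj, hj]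
          ring
    have hAU : A ∈ U := by simp only [hAdef]; exact hcombU _
    have hBU : Bf ∈ U := by simp only [hBdef]; exact hcombU _
    obtain ⟨α, hα⟩ := hDcoef A hAU
    obtain ⟨α', hα'⟩ := hDcoef Bf hBU
    have hαk : α k = 0 := by
      have hvan : ∀ m : ℕ, m ≤ n - 1 - (k:ℕ) →
          iteratedDeriv m (fun y => ∑ j, α j * q j y) b = 0 := by
        intro m hm
        have hfe : (fun y => ∑ j, α j * q j y) = deriv (fun y => A y / f₀ y) :=
          funext fun y => (hα y).symm
        rw [hfe, ← iteratedDeriv_succ']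
        have hdiv : (fun y => A y / f₀ y) = fun y => A y * (f₀ y)⁻¹ :=
          funext fun y => div_eq_mul_inv _ _
        rw [hdiv]
        refine itd_mul_zero hΩ hbΩ (m+1) A _ ?_ ?_ ?_
        · simp only [hAdef]; exact hcsm _ (m+1) (by omega)
        · exact hinv.of_le (by exact_mod_cast (by omega : m + 1 ≤ n))
        · intro i hi
          simp only [hAdef]
          rw [itd_combo p _ i hΩ hbΩ
            (fun j => ((hpsm j).of_le (by exact_mod_cast (by omega : i ≤ n))).contDiffOn)]
          refine Finset.sum_eq_zero fun j _ => ?_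
          by_cases hjk : (j:ℕ) < (k:ℕ)
          · rw [if_pos hjk, (hpord j).2.2.1 i (by omega), mul_zero]
          · rw [if_neg hjk, zero_mul]
      have h := tri_b q b hΩ hbΩ hqsm (fun i m hm => (hqord i).2.2.1 m hm)
        (fun i => (hqord i).2.2.2) α (n - 1 - (k:ℕ)) (by omega) hvan
      exact h k (le_refl _)
    have hα'k : α' k = 0 := by
      have hvan : ∀ m : ℕ, m ≤ (k:ℕ) →
          iteratedDeriv m (fun y => ∑ j, α' j * q j y) a = 0 := by
        intro m hm
        have hfe : (fun y => ∑ j, α' j * q j y) = deriv (fun y => Bf y / f₀ y) :=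
          funext fun y => (hα' y).symm
        rw [hfe, ← iteratedDeriv_succ']
        have hdiv : (fun y => Bf y / f₀ y) = fun y => Bf y * (f₀ y)⁻¹ :=
          funext fun y => div_eq_mul_inv _ _
        rw [hdiv]
        refine itd_mul_zero hΩ haΩ (m+1) Bf _ ?_ ?_ ?_
        · simp only [hBdef]; exact hcsm _ (m+1) (by omega)
        · exact hinv.of_le (by exact_mod_cast (by omega : m + 1 ≤ n))
        · intro i hi
          simp only [hBdef]
          rw [itd_combo p _ i hΩ haΩ
            (fun j => ((hpsm j).of_le (by exact_mod_cast (by omega : i ≤ n))).contDiffOn)]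
          refine Finset.sum_eq_zero fun j _ => ?_
          by_cases hjk : (k:ℕ)+1 < (j:ℕ)
          · rw [if_pos hjk, (hpord j).1 i (by omega), mul_zero]
          · rw [if_neg hjk, zero_mul]
      have h := tri_a q a hΩ haΩ hqsm (fun i m hm => (hqord i).1 m hm)
        (fun i => (hqord i).2.1) α' (k:ℕ) hvan
      exact h k (le_refl _)
    have hkey : ∀ x ∈ Ω, ∑ j, v j * q j x
        = ∑ j, α j * q j x + c' k.succ * ∑ j, ρ k j * q j x + ∑ j, α' j * q j x := by
      intro x hx
      have hfeq : (fun y => (∑ j, c j * p j y) / f₀ y)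
          =ᶠ[nhds x] fun y =>
            (A y / f₀ y + c' k.succ * (p k.succ y / f₀ y) + Bf y / f₀ y) + t := by
        filter_upwards [hΩ.mem_nhds hx] with y hy
        have hf₀y : f₀ y ≠ 0 := hy
        have e1 : A y / f₀ y + c' k.succ * (p k.succ y / f₀ y) + Bf y / f₀ y
            = (∑ j, c' j * p j y) / f₀ y := by
          rw [← hsplit y, add_div, add_div, mul_div_assoc]
        have e2 : (∑ j, c' j * p j y) = (∑ j, c j * p j y) - t * f₀ y := by
          rw [hβ y, Finset.mul_sum, ← Finset.sum_sub_distrib]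
          exact Finset.sum_congr rfl fun j _ => by simp only [hc'def]; ring
        rw [e1, e2, sub_div, mul_div_assoc, div_self hf₀y, mul_one, sub_add_cancel]
      have dA : DifferentiableAt ℝ (fun y => A y / f₀ y) x := hdiffU A hAU (by omega) x hx
      have dP : DifferentiableAt ℝ (fun y => p k.succ y / f₀ y) x :=
        hdiffU _ (hpU k.succ) (by omega) x hx
      have dB : DifferentiableAt ℝ (fun y => Bf y / f₀ y) x := hdiffU Bf hBU (by omega) x hx
      calc ∑ j, v j * q j x
          = deriv (fun y => (∑ j, c j * p j y) / f₀ y) x := (hv x hx).symm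
        _ = deriv (fun y =>
              (A y / f₀ y + c' k.succ * (p k.succ y / f₀ y) + Bf y / f₀ y) + t) x :=
            hfeq.deriv_eq
        _ = deriv (fun y => A y / f₀ y + c' k.succ * (p k.succ y / f₀ y) + Bf y / f₀ y) x :=
            deriv_add_const t
        _ = deriv (fun y => A y / f₀ y + c' k.succ * (p k.succ y / f₀ y)) x
            + deriv (fun y => Bf y / f₀ y) x :=
            deriv_add (dA.add (dP.const_mul _)) dB
        _ = deriv (fun y => A y / f₀ y) x + deriv (fun y => c' k.succ * (p k.succ y / f₀ y)) x
            + deriv (fun y => Bf y / f₀ y) x := by rw [deriv_fun_add dA (dP.const_mul _)]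
        _ = ∑ j, α j * q j x + c' k.succ * ∑ j, ρ k j * q j x + ∑ j, α' j * q j x := by
            rw [hα x, hα' x, deriv_const_mul_field, hρ k x]
    have hd : ∀ j : Fin n, v j - (α j + c' k.succ * ρ k j + α' j) = 0 := by
      have hvan : ∀ m : ℕ, m ≤ n - 1 →
          iteratedDeriv m
            (fun y => ∑ j, (v j - (α j + c' k.succ * ρ k j + α' j)) * q j y) a = 0 := by
        intro m _
        have hzero : ∀ y ∈ Ω, (∑ j, (v j - (α j + c' k.succ * ρ k j + α' j)) * q j y)
            = (fun _ : ℝ => (0:ℝ)) y := by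
          intro y hy
          have expand : ∑ j, (v j - (α j + c' k.succ * ρ k j + α' j)) * q j y
              = ∑ j, v j * q j y
                - (∑ j, α j * q j y + c' k.succ * ∑ j, ρ k j * q j y + ∑ j, α' j * q j y) := by
            rw [Finset.mul_sum, ← Finset.sum_add_distrib, ← Finset.sum_add_distrib,
              ← Finset.sum_sub_distrib]
            exact Finset.sum_congr rfl fun j _ => by ring
          rw [expand, hkey y hy, sub_self]
        exact (itd_congr hΩ haΩ hzero m).trans (itd_zero_fun m a)
      have h := tri_a q a hΩ haΩ hqsm (fun i m hm => (hqord i).1 m hm)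
        (fun i => (hqord i).2.1)
        (fun j => v j - (α j + c' k.succ * ρ k j + α' j)) (n-1) hvan
      intro j
      exact h j (by have := j.isLt; omega)
    have hvk := hd k
    rw [hαk, hα'k] at hvk
    have hvk' : v k = ρ k k * (c k.succ - t * β k.succ) := by
      have hce : c' k.succ = c k.succ - t * β k.succ := by simp only [hc'def]
      rw [hce] at hvk
      linarith [hvk]
    rw [hvk']
    simp only [hRdef]
    have hβs := (hβpos k.succ).ne'
    field_simp
  -- POSITIVITY OF R
  have hφdata : ∀ k : Fin n, ∃ Δ : Fin n → ℝ,
      (∀ j : Fin n, R j * Δ j = (if j = k then (1:ℝ) else 0)) ∧ 0 ≤ ∑ j, Δ j := by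
    intro k
    obtain ⟨φ, hφU, hφd⟩ := hqD k
    obtain ⟨cφ, hcφ⟩ := (Submodule.mem_span_range_iff_exists_fun ℝ).mp (by rw [hpspan]; exact hφU)
    have hcφ' : ∀ y, φ y = ∑ j, cφ j * p j y := by
      intro y
      have h := congrFun hcφ y
      simpa [Finset.sum_apply] using h.symm
    have happ := master cφ (fun j => if j = k then (1:ℝ) else 0) ?_
    · refine ⟨fun j => cφ j.succ / β j.succ - cφ j.castSucc / β j.castSucc,
        fun j => (happ j).symm, ?_⟩
      have htel : ∑ j : Fin n, (cφ j.succ / β j.succ - cφ j.castSucc / β j.castSucc)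
          = cφ (Fin.last n) / β (Fin.last n) - cφ 0 / β 0 :=
        fin_telescope (fun i : Fin (n+1) => cφ i / β i)
      have hGmono : MonotoneOn (fun y => φ y / f₀ y) (Set.Icc a b) := by
        refine monotoneOn_of_deriv_nonneg (convex_Icc a b) ?_ ?_ ?_
        · exact ((hUsmooth φ hφU).continuous.continuousOn).div hf₀c.continuousOn
            (fun x hx => (hf₀pos x hx).ne')
        · intro x hx
          rw [interior_Icc] at hx
          exact (hdiffU φ hφU (by have := k.isLt; omega) x
            (hIccΩ (Set.Ioo_subset_Icc_self hx))).differentiableWithinAt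
        · intro x hx
          rw [interior_Icc] at hx
          have h := (congrFun hφd x).symm
          rw [h]
          exact hqnn k x (Set.Ioo_subset_Icc_self hx)
      have hab' : φ a / f₀ a ≤ φ b / f₀ b :=
        hGmono (Set.left_mem_Icc.mpr hab.le) (Set.right_mem_Icc.mpr hab.le) hab.le
      have ha' : φ a / f₀ a = cφ 0 / β 0 := by rw [hcφ' a]; exact hrata cφ
      have hb' : φ b / f₀ b = cφ (Fin.last n) / β (Fin.last n) := by
        rw [hcφ' b]; exact hratb cφ
      rw [htel]
      rw [ha', hb'] at hab'
      linarith
    · intro x hx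
      have e : (fun y => (∑ j, cφ j * p j y) / f₀ y) = fun y => φ y / f₀ y :=
        funext fun y => by rw [← hcφ' y]
      rw [e, ← hφd]
      have hsum : ∑ j, (if j = k then (1:ℝ) else 0) * q j x
          = ∑ j, (if j = k then q j x else 0) := by
        refine Finset.sum_congr rfl fun j _ => ?_
        by_cases h : j = k <;> simp [h]
      rw [hsum, Finset.sum_ite_eq' Finset.univ k (fun j => q j x)]
      simp
  have hRne : ∀ k : Fin n, R k ≠ 0 := by
    intro k
    obtain ⟨Δ, h1, _⟩ := hφdata k
    intro h0
    have h := h1 k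
    rw [h0, zero_mul, if_pos rfl] at h
    exact one_ne_zero h.symm
  have hRpos : ∀ k : Fin n, 0 < R k := by
    intro k
    obtain ⟨Δ, h1, h2⟩ := hφdata k
    have hΔ0 : ∀ j : Fin n, j ≠ k → Δ j = 0 := by
      intro j hj
      have h := h1 j
      rw [if_neg hj] at h
      rcases mul_eq_zero.mp h with h' | h'
      · exact absurd h' (hRne j)
      · exact h'
    have hsum : ∑ j, Δ j = Δ k :=
      Finset.sum_eq_single k (fun j _ hj => hΔ0 j hj) (fun h => absurd (Finset.mem_univ _) h)
    have hRk : R k * Δ k = 1 := by have h := h1 k; rwa [if_pos rfl] at h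
    have hΔk : 0 ≤ Δ k := by rw [← hsum]; exact h2
    by_contra hneg
    push_neg at hneg
    nlinarith
  -- CONCLUSION
  have hwR : ∀ k : Fin n, w k = R k * (γ k.succ / β k.succ - γ k.castSucc / β k.castSucc) := by
    refine master γ w ?_
    intro x hx
    have e : (fun y => (∑ j, γ j * p j y) / f₀ y) = fun y => f₁ y / f₀ y :=
      funext fun y => by rw [← hγ y]
    rw [e]
    exact hw x
  rw [Fin.strictMono_iff_lt_succ]
  constructor
  · intro h k
    rw [hwR k]
    exact mul_pos (hRpos k) (sub_pos.mpr (h k))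
  · intro h k
    have hk := h k
    rw [hwR k] at hk
    have hR := hRpos k
    have hpos : 0 < γ k.succ / β k.succ - γ k.castSucc / β k.castSucc := by
      by_contra hneg
      push_neg at hneg
      nlinarith
    exact sub_pos.mp hpos
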